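/- Let K be an algebraically closed field and let α, α' ∈ K with α ∉ {0, −1} and α' ∉ {0, −1}. Then the points (α, 1) and (α', 1) of K × K are 𝒩-equivalent if and only if α' = α or α' = −1 − α. -/

import Mathlib

/-- The step relation generating the partial action of the group `𝒩` on `K × K`. -/
def Rstep {K : Type*} [Field K] (p q : K × K) : Prop :=
  (∃ s : K, s ≠ 0 ∧ q = (s ^ 2 * p.1, s⁻¹ ^ 2 * p.2)) ∨
  (p.2 ≠ 0 ∧ q = (p.2⁻¹ * (1 + p.1 * p.2), -p.2)) ∨
  (p.1 ≠ 0 ∧ q = (-p.1⁻¹, p.1 * (1 + p.1 * p.2))) ∨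
  (1 + p.1 * p.2 ≠ 0 ∧ q = (-p.2 * (1 + p.1 * p.2)⁻¹, -p.1 * (1 + p.1 * p.2)))

lemma Rstep_inv {K : Type*} [Field K] {p q : K × K} (h : Rstep p q) :
    (q.1 * q.2) ^ 2 + q.1 * q.2 = (p.1 * p.2) ^ 2 + p.1 * p.2 := by
  obtain ⟨s, hs, hq⟩ | ⟨hb, hq⟩ | ⟨ha, hq⟩ | ⟨hd, hq⟩ := h <;> subst hq <;>
    simp only [Prod.fst, Prod.snd] <;> field_simp <;> ring_nf
  have hd' : 1 + p.2 * p.1 ≠ 0 := by rwa [mul_comm]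
  field_simp
  ring

lemma EqvGen_inv {K : Type*} [Field K] {p q : K × K}
    (h : Relation.EqvGen Rstep p q) :
    (q.1 * q.2) ^ 2 + q.1 * q.2 = (p.1 * p.2) ^ 2 + p.1 * p.2 := by
  induction h with
  | rel _ _ h => exact Rstep_inv h
  | refl => rfl
  | symm _ _ _ ih => exact ih.symm
  | trans _ _ _ _ _ ih1 ih2 => exact ih2.trans ih1

/-- Two points `(α,1)`, `(α',1)` with `α, α' ∉ {0,-1}` are 𝒩-equivalent iff
`α' = α` or `α' = -1 - α`. -/
theorem M1_points_equivalent_iff {K : Type*} [Field K] [IsAlgClosed K]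
    (α α' : K) (hα0 : α ≠ 0) (hα1 : α ≠ -1) (hα'0 : α' ≠ 0) (hα'1 : α' ≠ -1) :
    Relation.EqvGen Rstep (α, (1 : K)) (α', (1 : K)) ↔ α' = α ∨ α' = -1 - α := by
  constructor
  · intro h
    have := EqvGen_inv h
    simp only [mul_one] at this
    have hfac : (α' - α) * (α' + α + 1) = 0 := by linear_combination this
    rcases mul_eq_zero.mp hfac with h1 | h2
    · left; exact sub_eq_zero.mp h1
    · right; linear_combination h2
  · rintro (rfl | rfl)
    · exact Relation.EqvGen.refl _
    · obtain ⟨i, hi⟩ := IsAlgClosed.exists_pow_nat_eq (-1 : K) (n := 2) (by norm_num)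
      have hi0 : i ≠ 0 := by
        intro h; rw [h] at hi; simp at hi
      have step1 : Rstep ((α, (1 : K))) ((1 + α, -1)) := by
        right; left
        refine ⟨one_ne_zero, ?_⟩
        simp
      have step2 : Rstep ((1 + α, (-1 : K))) ((-1 - α, 1)) := by
        left
        refine ⟨i, hi0, ?_⟩
        have hinv : i⁻¹ ^ 2 = -1 := by
          rw [inv_pow, hi, inv_neg, inv_one]
        rw [hi, hinv, Prod.mk.injEq]
        constructor <;> ring
      exact (Relation.EqvGen.rel _ _ step1).trans _ _ _
        (Relation.EqvGen.rel _ _ step2)
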